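/- (Classification of 𝔸¹-curves in X; Proposition 2.3 combined with Theorem 4.1 and Corollary 4.4.) Let f₀, f₁, f₂ ∈ 𝕜[t] be polynomials such that σ(f₀, f₁) − f₂^p = 1. Then there exist polynomials M, V, W ∈ 𝕜[t] such that f₀ = M·V^p, f₁ = M·W^p, and f₂ = M·σ^{1/p}(V,W) − 1. (That is, every 𝔸¹-curve in X = (ℙ², Δ_X), normalized so that the defining value of Δ_X along it equals 1, arises from the parameterization (4.4) via the inseparable cover Z → X.) -/

import Mathlib

open Polynomial Finset

section aux
variable (p : ℕ) (𝕜 : Type*) [Field 𝕜] [IsAlgClosed 𝕜] [CharP 𝕜 p]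

lemma frob_inj (hp : p.Prime) (g h : Polynomial 𝕜) (hgh : g ^ p = h ^ p) : g = h := by
  haveI := Fact.mk hp
  have : (g - h) ^ p = 0 := by rw [sub_pow_char, hgh, sub_self]
  exact sub_eq_zero.mp (pow_eq_zero_iff hp.ne_zero |>.mp this)

lemma pth_root (hp : p.Prime) (a : Polynomial 𝕜) (ha : derivative a = 0) :
    ∃ V : Polynomial 𝕜, a = V ^ p := by
  haveI := Fact.mk hp
  haveI : ExpChar 𝕜 p := ExpChar.prime hp
  refine ⟨(contract p a).map ((frobeniusEquiv 𝕜 p).symm : 𝕜 ≃+* 𝕜), ?_⟩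
  have h1 : expand 𝕜 p (contract p a) = a := expand_contract p ha hp.ne_zero
  have h2 := map_frobenius_expand p ((contract p a).map (((frobeniusEquiv 𝕜 p).symm : 𝕜 ≃+* 𝕜) : 𝕜 →+* 𝕜))
  rw [← h2, ← map_expand, h1, Polynomial.map_map]
  have : (frobenius 𝕜 p).comp (((frobeniusEquiv 𝕜 p).symm : 𝕜 ≃+* 𝕜) : 𝕜 →+* 𝕜) = RingHom.id 𝕜 := by
    ext x; exact frobenius_apply_frobeniusEquiv_symm 𝕜 p x
  rw [this, map_id]
end aux

lemma const_case (p : ℕ) (𝕜 : Type*) [Field 𝕜] [IsAlgClosed 𝕜] (hp : p.Prime)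
    (s : ℕ → 𝕜) (hs1 : s 1 = 1) (a b : Polynomial 𝕜) (hab : IsCoprime a b) (hb : b ≠ 0)
    (hP : (∑ i ∈ Ioo 0 p, C ((i : 𝕜) * s i) * a ^ (i - 1) * b ^ (p - i - 1)) = 0) :
    derivative a = 0 ∧ derivative b = 0 := by
  classical
  set K := RatFunc 𝕜
  set φ : Polynomial 𝕜 →+* K := algebraMap (Polynomial 𝕜) K with hφ
  have hinj : Function.Injective φ := IsFractionRing.injective _ _
  have hB : φ b ≠ 0 := fun h0 => hb (hinj (by simpa using h0))
  set q : Polynomial 𝕜 := ∑ i ∈ Ioo 0 p, C ((i : 𝕜) * s i) * X ^ (i - 1) with hqdef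
  have hq0 : q.coeff 0 = 1 := by
    rw [hqdef, finset_sum_coeff]
    rw [Finset.sum_eq_single 1]
    · simp [hs1, coeff_X_pow]
    · intro i hi hne
      obtain ⟨hi1, hi2⟩ := mem_Ioo.mp hi
      have : i - 1 ≠ 0 := by omega
      simp [coeff_X_pow, coeff_C_mul, this, Ne.symm this]
    · intro h1
      exact absurd (mem_Ioo.mpr ⟨one_pos, hp.one_lt⟩) h1
  have hq : q ≠ 0 := fun h => by simp [h] at hq0
  set x : K := φ a / φ b with hx
  have key : (aeval x q) * (φ b) ^ (p - 2) = 0 := by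
    rw [hqdef]
    rw [map_sum, Finset.sum_mul]
    have : ∀ i ∈ Ioo 0 p,
        (aeval x) (C ((i : 𝕜) * s i) * X ^ (i - 1)) * (φ b) ^ (p - 2)
          = φ (C ((i : 𝕜) * s i) * a ^ (i - 1) * b ^ (p - i - 1)) := by
      intro i hi
      obtain ⟨hi1, hi2⟩ := mem_Ioo.mp hi
      have hsplit : (p - 2 : ℕ) = (i - 1) + (p - i - 1) := by omega
      have hBpow : (φ b) ^ (i - 1) ≠ 0 := pow_ne_zero _ hB
      have hC : ∀ c : 𝕜, algebraMap 𝕜 K c = φ (C c) := fun c => by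
        rw [hφ, IsScalarTower.algebraMap_apply 𝕜 (Polynomial 𝕜) K, Polynomial.algebraMap_eq]
      rw [map_mul, map_pow, aeval_X, aeval_C, hsplit, pow_add, hx, div_pow, hC]
      simp only [map_mul, map_pow]
      rw [mul_assoc _ (φ a ^ (i - 1) / φ b ^ (i - 1)), ← mul_assoc (φ a ^ (i - 1) / φ b ^ (i - 1)),
        div_mul_cancel₀ _ hBpow]
      ring
    rw [Finset.sum_congr rfl this, ← map_sum, hP, map_zero]
  have hxq : aeval x q = 0 := by
    have := pow_ne_zero (p - 2) hB
    exact (mul_eq_zero.mp key).resolve_right this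
  -- q splits over 𝕜, so x is the image of a root r ∈ 𝕜
  have hsplits : q.Splits := IsAlgClosed.splits q
  have hmapne : q.map (algebraMap 𝕜 K) ≠ 0 := by
    simpa using (Polynomial.map_ne_zero_iff (algebraMap 𝕜 K).injective).mpr hq
  have hroot : x ∈ (q.map (algebraMap 𝕜 K)).roots := by
    rw [mem_roots hmapne]
    rw [IsRoot, eval_map, ← aeval_def]
    exact hxq
  rw [hsplits.roots_map _, Multiset.mem_map] at hroot
  obtain ⟨r, hr, hrx⟩ := hroot
  -- x = r, so a = C r * b
  have hA : φ a = φ (C r * b) := by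
    have : algebraMap 𝕜 K r = φ (C r) := by
      rw [hφ, IsScalarTower.algebraMap_apply 𝕜 (Polynomial 𝕜) K, Polynomial.algebraMap_eq]
    rw [map_mul, ← this, hrx, hx]
    rw [div_mul_cancel₀ _ hB]
  have hab' : a = C r * b := hinj hA
  have hbu : IsUnit b := hab.isUnit_of_dvd' ⟨C r, by rw [hab', mul_comm]⟩ dvd_rfl
  have hbd : b.natDegree = 0 := natDegree_eq_zero_of_isUnit hbu
  have hdb : derivative b = 0 := by
    rw [eq_C_of_natDegree_eq_zero hbd]; exact derivative_C
  refine ⟨?_, hdb⟩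
  rw [hab', derivative_mul, derivative_C, hdb, zero_mul, mul_zero, add_zero]

/-- **classification of 𝔸¹-curves in X.**  Let `p` be a prime and `𝕜` an
algebraically closed field of characteristic `p`.  Fix `σ_i ∈ 𝕜` with `σ_1 = σ_{p-1} = 1`
and `p`-th roots `τ i` (so `τ i ^ p = σ_i`).  If `f₀, f₁, f₂ ∈ 𝕜[t]` satisfy
`σ(f₀, f₁) − f₂^p = 1`, then there exist `M, V, W ∈ 𝕜[t]` with `f₀ = M·V^p`,
`f₁ = M·W^p`, and `f₂ = M·σ^{1/p}(V,W) − 1`. -/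
theorem A1_curves_in_X_parameterization
    (p : ℕ) (hp : p.Prime) (𝕜 : Type*) [Field 𝕜] [IsAlgClosed 𝕜] [CharP 𝕜 p]
    (s τ : ℕ → 𝕜) (hs1 : s 1 = 1) (hsp : s (p - 1) = 1) (hτ : ∀ i, τ i ^ p = s i)
    (f₀ f₁ f₂ : Polynomial 𝕜)
    (h : (∑ i ∈ Ioo 0 p, C (s i) * f₀ ^ i * f₁ ^ (p - i)) - f₂ ^ p = 1) :
    ∃ M V W : Polynomial 𝕜,
      f₀ = M * V ^ p ∧ f₁ = M * W ^ p ∧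
      f₂ = M * (∑ i ∈ Ioo 0 p, C (τ i) * V ^ i * W ^ (p - i)) - 1 := by
  classical
  haveI := Fact.mk hp
  haveI : ExpChar 𝕜 p := ExpChar.prime hp
  by_cases h00 : f₀ = 0 ∧ f₁ = 0
  · obtain ⟨h0, h1⟩ := h00
    refine ⟨0, 0, 0, by simp [h0], by simp [h1], ?_⟩
    have hsum0 : (∑ i ∈ Ioo 0 p, C (s i) * f₀ ^ i * f₁ ^ (p - i)) = 0 := by
      apply Finset.sum_eq_zero; intro i hi
      obtain ⟨hi1, _⟩ := mem_Ioo.mp hi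
      rw [h0, zero_pow hi1.ne', mul_zero, zero_mul]
    rw [hsum0, zero_sub] at h
    have hf2 : f₂ ^ p = (-1 : Polynomial 𝕜) ^ p := by
      rw [neg_one_pow_char]
      linear_combination -h
    have := frob_inj p 𝕜 hp f₂ (-1) hf2
    rw [this]; ring
  · set M := EuclideanDomain.gcd f₀ f₁ with hMdef
    have hM : M ≠ 0 := by
      rw [hMdef, Ne, EuclideanDomain.gcd_eq_zero_iff]
      exact h00
    set a := f₀ / M with hadef
    set b := f₁ / M with hbdef
    have hf0 : f₀ = M * a :=
      (EuclideanDomain.mul_div_cancel' hM (EuclideanDomain.gcd_dvd_left f₀ f₁)).symm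
    have hf1 : f₁ = M * b :=
      (EuclideanDomain.mul_div_cancel' hM (EuclideanDomain.gcd_dvd_right f₀ f₁)).symm
    have hab : IsCoprime a b := by
      refine ⟨EuclideanDomain.gcdA f₀ f₁, EuclideanDomain.gcdB f₀ f₁, ?_⟩
      apply mul_left_cancel₀ hM
      calc M * (EuclideanDomain.gcdA f₀ f₁ * a + EuclideanDomain.gcdB f₀ f₁ * b)
          = f₀ * EuclideanDomain.gcdA f₀ f₁ + f₁ * EuclideanDomain.gcdB f₀ f₁ := by
            rw [hf0, hf1]; ring
        _ = M := (EuclideanDomain.gcd_eq_gcd_ab f₀ f₁).symm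
        _ = M * 1 := (mul_one M).symm
    set g := f₂ + 1 with hgdef
    set S := ∑ i ∈ Ioo 0 p, C (s i) * a ^ i * b ^ (p - i) with hSdef
    have hgp : g ^ p = M ^ p * S := by
      rw [hgdef, add_pow_char, one_pow]
      have h' : (∑ i ∈ Ioo 0 p, C (s i) * f₀ ^ i * f₁ ^ (p - i)) = f₂ ^ p + 1 := by
        linear_combination h
      rw [← h', hSdef, Finset.mul_sum]
      refine Finset.sum_congr rfl fun i hi => ?_
      obtain ⟨hi1, hi2⟩ := mem_Ioo.mp hi
      have hMp : M ^ i * M ^ (p - i) = M ^ p := by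
        rw [← pow_add, Nat.add_sub_cancel' hi2.le]
      rw [hf0, hf1, mul_pow, mul_pow]
      linear_combination C (s i) * a ^ i * b ^ (p - i) * hMp
    have hdg : derivative (g ^ p) = 0 := by
      rw [derivative_pow]
      simp [CharP.cast_eq_zero 𝕜 p]
    have hdS : derivative S = 0 := by
      have h1 : derivative (M ^ p * S) = 0 := by rw [← hgp]; exact hdg
      rw [derivative_mul, derivative_pow] at h1
      simp only [CharP.cast_eq_zero 𝕜 p, map_zero, zero_mul, mul_zero, add_zero, zero_add] at h1
      rcases mul_eq_zero.mp h1 with h2 | h2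
      · exact absurd h2 (pow_ne_zero p hM)
      · exact h2
    set P := ∑ i ∈ Ioo 0 p, C ((i : 𝕜) * s i) * a ^ (i - 1) * b ^ (p - i - 1) with hPdef
    have hfact : derivative S = P * (b * derivative a - a * derivative b) := by
      rw [hSdef, derivative_sum, hPdef, Finset.sum_mul]
      refine Finset.sum_congr rfl fun i hi => ?_
      obtain ⟨hi1, hi2⟩ := mem_Ioo.mp hi
      have e1 : a ^ (i - 1) * a = a ^ i := by
        rw [← pow_succ]; congr 1; omega
      have e2 : b ^ (p - i - 1) * b = b ^ (p - i) := by
        rw [← pow_succ]; congr 1; omega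
      have e3 : ((p - i : ℕ) : 𝕜) = -(i : 𝕜) := by
        rw [Nat.cast_sub hi2.le, CharP.cast_eq_zero 𝕜 p, zero_sub]
      simp only [derivative_mul, derivative_C, derivative_pow, zero_mul, zero_add, C_mul]
      rw [e3, map_neg, ← e1, ← e2]
      ring
    have hzero : P * (b * derivative a - a * derivative b) = 0 := by
      rw [← hfact]; exact hdS
    have hda : derivative a = 0 ∧ derivative b = 0 := by
      rcases mul_eq_zero.mp hzero with hP | hW
      · by_cases hb : b = 0
        · rw [hb] at hab
          have hau : IsUnit a := isCoprime_zero_right.mp hab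
          refine ⟨?_, by rw [hb]; exact derivative_zero⟩
          rw [eq_C_of_natDegree_eq_zero (natDegree_eq_zero_of_isUnit hau)]
          exact derivative_C
        · exact const_case p 𝕜 hp s hs1 a b hab hb hP
      · have hw : b * derivative a = a * derivative b := sub_eq_zero.mp hW
        constructor
        · have hdvd : a ∣ derivative a :=
            hab.dvd_of_dvd_mul_left ⟨derivative b, hw⟩
          by_contra hne
          have ha0 : a ≠ 0 := fun haz => hne (zero_dvd_iff.mp (haz ▸ hdvd))
          exact absurd ((Polynomial.degree_le_of_dvd hdvd hne).trans_lt
            (Polynomial.degree_derivative_lt ha0)) (lt_irrefl _)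
        · have hdvd : b ∣ derivative b :=
            hab.symm.dvd_of_dvd_mul_left ⟨derivative a, hw.symm⟩
          by_contra hne
          have hb0 : b ≠ 0 := fun hbz => hne (zero_dvd_iff.mp (hbz ▸ hdvd))
          exact absurd ((Polynomial.degree_le_of_dvd hdvd hne).trans_lt
            (Polynomial.degree_derivative_lt hb0)) (lt_irrefl _)
    obtain ⟨hda', hdb'⟩ := hda
    obtain ⟨V, hV⟩ := pth_root p 𝕜 hp a hda'
    obtain ⟨W, hW⟩ := pth_root p 𝕜 hp b hdb'
    refine ⟨M, V, W, by rw [hf0, hV], by rw [hf1, hW], ?_⟩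
    set T := ∑ i ∈ Ioo 0 p, C (τ i) * V ^ i * W ^ (p - i) with hTdef
    have hTp : T ^ p = S := by
      rw [hTdef, sum_pow_char, hSdef]
      refine Finset.sum_congr rfl fun i hi => ?_
      rw [mul_pow, mul_pow, ← C_pow, hτ i, hV, hW, pow_right_comm V, pow_right_comm W]
    have hgMT : g = M * T :=
      frob_inj p 𝕜 hp g (M * T) (by rw [mul_pow, hTp]; exact hgp)
    have hf2 : f₂ = g - 1 := by rw [hgdef]; ring
    rw [hf2, hgMT]
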